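/- Let W be a class of 1-cells of a bicategory B that admits a right bicalculus of fractions. Let π₀B be the category with the same objects as B and with Hom(a, b) the set of connected components of the hom-category B(a, b) (the quotient of the set of 1-cells a → b by the equivalence relation generated by the existence of a 2-cell between them), with composition induced by that of B, and let W₀ be the class of morphisms of π₀B whose equivalence class contains some arrow of W. Then W₀ admits a one-dimensional right calculus of fractions in π₀B: W₀ contains all identities and is stable under composition; for every [w] : a → b in W₀ and [f] : c → b there exist [u] : d → c in W₀ and [h] : d → a with [f] ∘ [u] = [w] ∘ [h]; and for every pair [f], [g] : b → c and [w] : c → d in W₀ with [w] ∘ [f] = [w] ∘ [g], there exists [u] : a → b in W₀ with [f] ∘ [u] = [g] ∘ [u]. -/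

import Mathlib

open CategoryTheory Bicategory

universe w v u

namespace Paper

variable (B : Type u) [Bicategory.{w, v} B]

/-- A 1-cell is an equivalence if there is a 1-cell in the opposite direction and invertible
2-cells relating the two composites to identities. -/
def IsEquiv1Cell {a b : B} (f : a ⟶ b) : Prop :=
  ∃ g : b ⟶ a, Nonempty (f ≫ g ≅ 𝟙 a) ∧ Nonempty (g ≫ f ≅ 𝟙 b)

/-- Axiom (0-Frc). -/
def Frc0 (W : ∀ ⦃a b : B⦄, (a ⟶ b) → Prop) : Prop :=
  ∀ ⦃A B' C : B⦄ (w : A ⟶ B') (f : C ⟶ B'), W w →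
    ∃ (D : B) (u : D ⟶ C) (h : D ⟶ A), W u ∧ Nonempty (u ≫ f ≅ h ≫ w)

/-- Axiom (1-Frc). -/
def Frc1 (W : ∀ ⦃a b : B⦄, (a ⟶ b) → Prop) : Prop :=
  ∀ ⦃B' C D : B⦄ (w : C ⟶ D) (f g : B' ⟶ C), W w → ∀ α : f ≫ w ⟶ g ≫ w,
    ∃ (A : B) (u : A ⟶ B'), W u ∧ ∃ β : u ≫ f ⟶ u ≫ g,
      (u ◁ α) ≫ (α_ u g w).inv = (α_ u f w).inv ≫ (β ▷ w)

/-- Axiom (2-Frc). -/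
def Frc2 (W : ∀ ⦃a b : B⦄, (a ⟶ b) → Prop) : Prop :=
  ∀ ⦃B' C D : B⦄ (w : C ⟶ D) (f g : B' ⟶ C), W w → ∀ α β : f ⟶ g,
    α ▷ w = β ▷ w → ∃ (A : B) (u : A ⟶ B'), W u ∧ u ◁ α = u ◁ β

/-- A class of 1-cells admits a right bicalculus of fractions. -/
structure RightBicalculus (W : ∀ ⦃a b : B⦄, (a ⟶ b) → Prop) : Prop where
  equivalences : ∀ ⦃a b : B⦄ (f : a ⟶ b), IsEquiv1Cell B f → W f
  comp : ∀ ⦃a b c : B⦄ (f : a ⟶ b) (g : b ⟶ c), W f → W g → W (f ≫ g)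
  iso_closed : ∀ ⦃a b : B⦄ (f w : a ⟶ b), W w → Nonempty (f ≅ w) → W f
  frc0 : Frc0 B W
  frc1 : Frc1 B W
  frc2 : Frc2 B W

/-- The objects of the category `π₀ B`. -/
structure Pi0 where
  obj : B

variable {B}

/-- `π₀ B` : same objects as `B`, hom-sets the connected components of the hom-categories,
composition induced by that of `B`. -/
instance Pi0.category : Category (Pi0 B) where
  Hom a b := Quot (fun f g : a.obj ⟶ b.obj => Nonempty (f ⟶ g))
  id a := Quot.mk _ (𝟙 a.obj)
  comp {a b c} := Quot.map₂ (· ≫ ·)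
    (fun f _ _ h => h.elim fun η => ⟨f ◁ η⟩)
    (fun _ _ g h => h.elim fun η => ⟨η ▷ g⟩)
  id_comp φ := Quot.inductionOn φ fun f => Quot.sound ⟨(λ_ f).hom⟩
  comp_id φ := Quot.inductionOn φ fun f => Quot.sound ⟨(ρ_ f).hom⟩
  assoc f g h := by
    induction f using Quot.ind
    induction g using Quot.ind
    induction h using Quot.ind
    exact Quot.sound ⟨(α_ _ _ _).hom⟩

/-- The class of arrows of `π₀ B` whose connected component contains some arrow of `W`. -/
def W0 (W : ∀ ⦃a b : B⦄, (a ⟶ b) → Prop) {a b : Pi0 B} (φ : a ⟶ b) : Prop :=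
  ∃ w : a.obj ⟶ b.obj, W w ∧ Quot.mk _ w = φ


section Aux

variable {B : Type u} [Bicategory.{w, v} B]

private lemma mk_sound {a b : B} {p q : a ⟶ b} (η : p ⟶ q) :
    Quot.mk (fun f g : a ⟶ b => Nonempty (f ⟶ g)) p = Quot.mk _ q :=
  Quot.sound ⟨η⟩

private lemma mk_wl {a b c : B} (r : a ⟶ b) {p q : b ⟶ c}
    (h : Quot.mk (fun f g : b ⟶ c => Nonempty (f ⟶ g)) p = Quot.mk _ q) :
    Quot.mk (fun f g : a ⟶ c => Nonempty (f ⟶ g)) (r ≫ p) = Quot.mk _ (r ≫ q) :=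
  congrArg (Quot.map (r ≫ ·) fun _ _ h => h.elim fun η => ⟨r ◁ η⟩) h

private lemma mk_wr {a b c : B} {p q : a ⟶ b} (r : b ⟶ c)
    (h : Quot.mk (fun f g : a ⟶ b => Nonempty (f ⟶ g)) p = Quot.mk _ q) :
    Quot.mk (fun f g : a ⟶ c => Nonempty (f ⟶ g)) (p ≫ r) = Quot.mk _ (q ≫ r) :=
  congrArg (Quot.map (· ≫ r) fun _ _ h => h.elim fun η => ⟨η ▷ r⟩) h

private lemma mk_assoc {a b c d : B} (f : a ⟶ b) (g : b ⟶ c) (h : c ⟶ d) :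
    Quot.mk (fun p q : a ⟶ d => Nonempty (p ⟶ q)) ((f ≫ g) ≫ h) = Quot.mk _ (f ≫ (g ≫ h)) :=
  mk_sound (α_ f g h).hom

private lemma W_id {W : ∀ ⦃a b : B⦄, (a ⟶ b) → Prop} (hW : RightBicalculus B W) (a : B) :
    W (𝟙 a) :=
  hW.equivalences _ ⟨𝟙 a, ⟨λ_ _⟩, ⟨λ_ _⟩⟩

/-- One zig-zag step: if there is a single 2-cell between `x` and `y` (in either direction),
and both `x` and `y` are "covered" by composites with `w`, then the covering data can be
refined compatibly. -/
private lemma step {W : ∀ ⦃a b : B⦄, (a ⟶ b) → Prop} (hW : RightBicalculus B W)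
    {b c d : B} {w : c ⟶ d} (hw : W w) {x y : b ⟶ d}
    (hα : Nonempty (x ⟶ y) ∨ Nonempty (y ⟶ x))
    {A A' : B} {u : A ⟶ b} {u' : A' ⟶ b} {h : A ⟶ c} {h' : A' ⟶ c}
    (hu' : W u') (θ : u ≫ x ≅ h ≫ w) (θ' : u' ≫ y ≅ h' ≫ w) :
    ∃ (E : B) (s : E ⟶ A) (s' : E ⟶ A'), W s ∧
      Quot.mk (fun p q : E ⟶ b => Nonempty (p ⟶ q)) (s ≫ u) = Quot.mk _ (s' ≫ u') ∧
      Quot.mk (fun p q : E ⟶ c => Nonempty (p ⟶ q)) (s ≫ h) = Quot.mk _ (s' ≫ h') := by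
  obtain ⟨D, v, k, hv, ⟨φ⟩⟩ := hW.frc0 u' u hu'
  -- φ : v ≫ u ≅ k ≫ u'
  obtain ⟨E, t, ht, hβ⟩ : ∃ (E : B) (t : E ⟶ D), W t ∧
      Quot.mk (fun p q : E ⟶ c => Nonempty (p ⟶ q)) (t ≫ (v ≫ h)) =
        Quot.mk _ (t ≫ (k ≫ h')) := by
    rcases hα with ⟨⟨α⟩⟩ | ⟨⟨α⟩⟩
    · have γ : (v ≫ h) ≫ w ⟶ (k ≫ h') ≫ w :=
        (α_ v h w).hom ≫ (v ◁ θ.inv) ≫ (v ◁ (u ◁ α)) ≫ (α_ v u y).inv ≫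
          (φ.hom ▷ y) ≫ (α_ k u' y).hom ≫ (k ◁ θ'.hom) ≫ (α_ k h' w).inv
      obtain ⟨E, t, ht, β, -⟩ := hW.frc1 w (v ≫ h) (k ≫ h') hw γ
      exact ⟨E, t, ht, mk_sound β⟩
    · have γ : (k ≫ h') ≫ w ⟶ (v ≫ h) ≫ w :=
        (α_ k h' w).hom ≫ (k ◁ θ'.inv) ≫ (k ◁ (u' ◁ α)) ≫ (α_ k u' x).inv ≫
          (φ.inv ▷ x) ≫ (α_ v u x).hom ≫ (v ◁ θ.hom) ≫ (α_ v h w).inv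
      obtain ⟨E, t, ht, β, -⟩ := hW.frc1 w (k ≫ h') (v ≫ h) hw γ
      exact ⟨E, t, ht, (mk_sound β).symm⟩
  refine ⟨E, t ≫ v, t ≫ k, hW.comp t v ht hv, ?_, ?_⟩
  · calc Quot.mk _ ((t ≫ v) ≫ u) = Quot.mk _ (t ≫ (v ≫ u)) := mk_assoc ..
      _ = Quot.mk _ (t ≫ (k ≫ u')) := mk_wl t (mk_sound φ.hom)
      _ = Quot.mk _ ((t ≫ k) ≫ u') := (mk_assoc ..).symm
  · calc Quot.mk _ ((t ≫ v) ≫ h) = Quot.mk _ (t ≫ (v ≫ h)) := mk_assoc ..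
      _ = Quot.mk _ (t ≫ (k ≫ h')) := hβ
      _ = Quot.mk _ ((t ≫ k) ≫ h') := (mk_assoc ..).symm

private lemma eqvGen_rtg {α : Type*} {r : α → α → Prop} {x y : α}
    (h : Relation.EqvGen r x y) :
    Relation.ReflTransGen (fun p q => r p q ∨ r q p) x y := by
  induction h with
  | rel a b hab => exact Relation.ReflTransGen.single (Or.inl hab)
  | refl a => exact Relation.ReflTransGen.refl
  | symm a b _ ih =>
      exact (@Relation.ReflTransGen.stdSymm _ (fun p q => r p q ∨ r q p) ⟨fun _ _ hs => hs.symm⟩).symm _ _ ih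
  | trans a b c _ _ ih1 ih2 => exact ih1.trans ih2

/-- The key zig-zag lemma. -/
private lemma key {W : ∀ ⦃a b : B⦄, (a ⟶ b) → Prop} (hW : RightBicalculus B W)
    {b c d : B} {w : c ⟶ d} (hw : W w) {x y : b ⟶ d}
    (hxy : Relation.ReflTransGen
      (fun p q : b ⟶ d => Nonempty (p ⟶ q) ∨ Nonempty (q ⟶ p)) x y) :
    ∀ {A A' : B} (u : A ⟶ b) (u' : A' ⟶ b) (h : A ⟶ c) (h' : A' ⟶ c),
      W u → W u' → (u ≫ x ≅ h ≫ w) → (u' ≫ y ≅ h' ≫ w) →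
      ∃ (E : B) (s : E ⟶ A) (s' : E ⟶ A'), W s ∧
        Quot.mk (fun p q : E ⟶ b => Nonempty (p ⟶ q)) (s ≫ u) = Quot.mk _ (s' ≫ u') ∧
        Quot.mk (fun p q : E ⟶ c => Nonempty (p ⟶ q)) (s ≫ h) = Quot.mk _ (s' ≫ h') := by
  induction hxy with
  | refl =>
      intro A A' u u' h h' hu hu' θ θ'
      exact step hW hw (Or.inl ⟨𝟙 x⟩) hu' θ θ'
  | tail hxy hS ih =>
      intro A A' u u' h h' hu hu' θ θ'
      rename_i y z
      -- cover `y` using frc0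
      obtain ⟨D, u₀, h₀, hu₀, ⟨θ₀⟩⟩ := hW.frc0 w y hw
      obtain ⟨E, s, s₀, hs, e1, e2⟩ := ih u u₀ h h₀ hu hu₀ θ θ₀
      obtain ⟨E', t₀, t, ht₀, e1', e2'⟩ := step hW hw hS hu' θ₀ θ'
      -- refine `s₀ : E ⟶ D` and `t₀ : E' ⟶ D`
      obtain ⟨F, r, q, hr, ⟨ψ⟩⟩ := hW.frc0 t₀ s₀ ht₀
      refine ⟨F, r ≫ s, q ≫ t, hW.comp r s hr hs, ?_, ?_⟩
      · calc Quot.mk _ ((r ≫ s) ≫ u) = Quot.mk _ (r ≫ (s ≫ u)) := mk_assoc ..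
          _ = Quot.mk _ (r ≫ (s₀ ≫ u₀)) := mk_wl r e1
          _ = Quot.mk _ ((r ≫ s₀) ≫ u₀) := (mk_assoc ..).symm
          _ = Quot.mk _ ((q ≫ t₀) ≫ u₀) := mk_wr u₀ (mk_sound ψ.hom)
          _ = Quot.mk _ (q ≫ (t₀ ≫ u₀)) := mk_assoc ..
          _ = Quot.mk _ (q ≫ (t ≫ u')) := mk_wl q e1'
          _ = Quot.mk _ ((q ≫ t) ≫ u') := (mk_assoc ..).symm
      · calc Quot.mk _ ((r ≫ s) ≫ h) = Quot.mk _ (r ≫ (s ≫ h)) := mk_assoc ..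
          _ = Quot.mk _ (r ≫ (s₀ ≫ h₀)) := mk_wl r e2
          _ = Quot.mk _ ((r ≫ s₀) ≫ h₀) := (mk_assoc ..).symm
          _ = Quot.mk _ ((q ≫ t₀) ≫ h₀) := mk_wr h₀ (mk_sound ψ.hom)
          _ = Quot.mk _ (q ≫ (t₀ ≫ h₀)) := mk_assoc ..
          _ = Quot.mk _ (q ≫ (t ≫ h')) := mk_wl q e2'
          _ = Quot.mk _ ((q ≫ t) ≫ h') := (mk_assoc ..).symm

end Aux

/-- If `W` admits a right bicalculus of fractions in `B`, then `W₀` admits a one-dimensional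
right calculus of fractions in `π₀ B`. -/
theorem pi0_fractions (W : ∀ ⦃a b : B⦄, (a ⟶ b) → Prop) (hW : RightBicalculus B W) :
    (∀ a : Pi0 B, W0 W (𝟙 a)) ∧
    (∀ ⦃a b c : Pi0 B⦄ (φ : a ⟶ b) (ψ : b ⟶ c), W0 W φ → W0 W ψ → W0 W (φ ≫ ψ)) ∧
    (∀ ⦃a b c : Pi0 B⦄ (w : a ⟶ b) (f : c ⟶ b), W0 W w →
      ∃ (d : Pi0 B) (u : d ⟶ c) (h : d ⟶ a), W0 W u ∧ u ≫ f = h ≫ w) ∧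
    (∀ ⦃b c d : Pi0 B⦄ (f g : b ⟶ c) (w : c ⟶ d), W0 W w → f ≫ w = g ≫ w →
      ∃ (a : Pi0 B) (u : a ⟶ b), W0 W u ∧ u ≫ f = u ≫ g) := by
  refine ⟨?_, ?_, ?_, ?_⟩
  · intro a
    exact ⟨𝟙 a.obj, W_id hW a.obj, rfl⟩
  · rintro a b c φ ψ ⟨w', hw, rfl⟩ ⟨v', hv, rfl⟩
    exact ⟨w' ≫ v', hW.comp w' v' hw hv, rfl⟩
  · rintro a b c φ ψ ⟨w', hw, rfl⟩
    induction ψ using Quot.ind with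
    | _ f' =>
      obtain ⟨D, u, h, hu, ⟨θ⟩⟩ := hW.frc0 w' f' hw
      exact ⟨⟨D⟩, Quot.mk _ u, Quot.mk _ h, ⟨u, hu, rfl⟩, Quot.sound ⟨θ.hom⟩⟩
  · rintro b c d f g φ ⟨w', hw, rfl⟩ hfg
    induction f using Quot.ind with
    | _ f' =>
    induction g using Quot.ind with
    | _ g' =>
      have hfg' : Relation.EqvGen
          (fun p q : b.obj ⟶ d.obj => Nonempty (p ⟶ q)) (f' ≫ w') (g' ≫ w') :=
        Quot.eq.mp hfg
      obtain ⟨E, s, s', hs, e1, e2⟩ :=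
        key hW hw (eqvGen_rtg hfg') (𝟙 b.obj) (𝟙 b.obj) f' g'
          (W_id hW b.obj) (W_id hW b.obj) (λ_ (f' ≫ w')) (λ_ (g' ≫ w'))
      have hss' : Quot.mk (fun p q : E ⟶ b.obj => Nonempty (p ⟶ q)) s = Quot.mk _ s' :=
        (mk_sound (ρ_ s).inv).trans (e1.trans (mk_sound (ρ_ s').hom))
      refine ⟨⟨E⟩, Quot.mk _ s, ⟨s, hs, rfl⟩, ?_⟩
      show Quot.mk _ (s ≫ f') = Quot.mk _ (s ≫ g')
      exact e2.trans (mk_wr g' hss'.symm)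


end Paper
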